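/- Let (H, K, ◇) be a Takeuchi pair of bialgebras over a field k, (M, ρ^K) a left K-comodule, and give M the left H-module structure h·m = Σ ◇(h ⊗ m⁽⁻¹⁾) m⁽⁰⁾. Then the P(H)-Lie module structure on M obtained by restricting the H-action to primitive elements coincides with the P(H)-Lie module structure obtained from the Q(K)-Lie comodule structure (induced by K → Q(K)) via the Michaelis pairing ev : P(H) ⊗ Q(K) → k; in particular the square of forgetful/induction functors CoMod(K) → Mod(H) → LieMod(P(H)) and CoMod(K) → LieCoMod(Q(K)) → LieMod(P(H)) commutes. -/

import Mathlib

open TensorProduct Coalgebra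

variable {k : Type*} [Field k]

/-- The submodule of primitive elements of a bialgebra. -/
noncomputable def primitives (k H : Type*) [Field k] [Ring H] [Bialgebra k H] :
    Submodule k H where
  carrier := {x : H | comul (R := k) x = x ⊗ₜ[k] (1 : H) + (1 : H) ⊗ₜ[k] x}
  add_mem' := by
    intro a b ha hb
    simp only [Set.mem_setOf_eq] at *
    rw [map_add, ha, hb, add_tmul, tmul_add]
    abel
  zero_mem' := by simp
  smul_mem' := by
    intro c x hx
    simp only [Set.mem_setOf_eq] at *
    rw [map_smul, hx, smul_add, smul_tmul', tmul_smul, smul_tmul']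

/-- Let `(H, K, ◇)` be a Takeuchi pair of bialgebras over a field `k`, `(M, ρ)` a
left `K`-comodule, and equip `M` with the left `H`-module structure
`h·m = Σ ◇(h ⊗ m⁽⁻¹⁾) m⁽⁰⁾`.  Then the `P(H)`-Lie module structure on `M`
obtained by restricting this `H`-action to primitive elements coincides with the
`P(H)`-Lie module structure obtained from the induced `Q(K)`-Lie comodule structure
via the Michaelis pairing `ev : P(H) ⊗ Q(K) → k`.  In particular the square of
functors `CoMod(K) → Mod(H) → LieMod(P(H))` and
`CoMod(K) → LieCoMod(Q(K)) → LieMod(P(H))` commutes. -/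
theorem stmt19 {H K M : Type*} [Ring H] [Bialgebra k H] [Ring K] [Bialgebra k K]
    [AddCommGroup M] [Module k M]
    (D : H →ₗ[k] K →ₗ[k] k)
    (h1 : ∀ h : H, D h 1 = counit (R := k) h)
    (h2 : ∀ c : K, D 1 c = counit (R := k) c)
    (h3 : ∀ (h h' : H) (c : K), D (h * h') c
      = (TensorProduct.lid k k) (TensorProduct.map (D h) (D h') (comul (R := k) c)))
    (h4 : ∀ (h : H) (c c' : K), D h (c * c')
      = (TensorProduct.lid k k)
          (TensorProduct.map (D.flip c) (D.flip c') (comul (R := k) h)))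
    -- a left `K`-comodule `(M, ρ)`:
    (ρ : M →ₗ[k] K ⊗[k] M)
    (hcounit : ∀ m : M,
      (TensorProduct.lid k M)
        (TensorProduct.map (counit (R := k)) LinearMap.id (ρ m)) = m)
    (hcoassoc : LinearMap.lTensor K ρ ∘ₗ ρ
      = (TensorProduct.assoc k K K M).toLinearMap ∘ₗ
          TensorProduct.map (comul (R := k)) LinearMap.id ∘ₗ ρ)
    -- data of the Michaelis pair `(P(H), Q(K), ev)`:
    (hproj : ∀ x : K, x - algebraMap k K (counit (R := k) x)
      ∈ LinearMap.ker (counit (R := k) (A := K))) :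
    letI P : Submodule k H := primitives k H
    letI I : Submodule k K := LinearMap.ker (counit (R := k) (A := K))
    letI I2 : Submodule k K := I * I
    letI QK := ↥I ⧸ Submodule.comap I.subtype I2
    letI π : ↥I →ₗ[k] QK := (Submodule.comap I.subtype I2).mkQ
    -- the projection `K → Q(K)`, `x ↦ x − ε(x)1 mod I²`:
    letI πK : K →ₗ[k] QK := π ∘ₗ
      ((LinearMap.id - (Algebra.linearMap k K) ∘ₗ
        (counit (R := k) (A := K))).codRestrict I hproj)
    -- the `H`-module structure on `M` induced by `◇`:
    letI act : H → M →ₗ[k] M := fun h =>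
      (TensorProduct.lid k M).toLinearMap ∘ₗ
        TensorProduct.map (D h) LinearMap.id ∘ₗ ρ
    -- the `Q(K)`-Lie comodule structure on `M`:
    letI δQ : M →ₗ[k] QK ⊗[k] M := TensorProduct.map πK LinearMap.id ∘ₗ ρ
    ∀ ev : ↥P →ₗ[k] QK →ₗ[k] k,
      -- `ev` is the Michaelis pairing induced by `◇`:
      (∀ (p : ↥P) (c : ↥I), ev p (π c) = D p.1 c.1) →
      -- the two `P(H)`-Lie module structures on `M` coincide:
      ∀ (p : ↥P) (m : M),
        act p.1 m
          = (TensorProduct.lid k M)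
              (TensorProduct.map (ev p) LinearMap.id (δQ m)) := by
  intro ev hev p m
  -- counit vanishes on primitive elements
  have hεp : counit (R := k) (p.1 : H) = 0 := by
    have hp : comul (R := k) (p.1 : H) = p.1 ⊗ₜ[k] (1 : H) + (1 : H) ⊗ₜ[k] p.1 := p.2
    have h := Coalgebra.rTensor_counit_comul (R := k) (p.1 : H)
    rw [hp, map_add] at h
    simp only [LinearMap.rTensor_tmul, Bialgebra.counit_one] at h
    have h0 : (counit (R := k) (p.1 : H)) ⊗ₜ[k] (1 : H) = (0 : k ⊗[k] H) := by
      have := congrArg (fun z => z - (1 : k) ⊗ₜ[k] (p.1 : H)) h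
      simpa using this
    have := congrArg (counit (R := k) ∘ (TensorProduct.lid k H)) h0
    simpa [Bialgebra.counit_one] using this
  -- compare the two linear maps on `ρ m`
  have hmaps : ((TensorProduct.lid k M).toLinearMap ∘ₗ
        TensorProduct.map (D p.1) (LinearMap.id : M →ₗ[k] M))
      = ((TensorProduct.lid k M).toLinearMap ∘ₗ
        TensorProduct.map (ev p) LinearMap.id ∘ₗ
        TensorProduct.map
          ((Submodule.comap (LinearMap.ker (counit (R := k) (A := K))).subtype
              (LinearMap.ker (counit (R := k) (A := K)) *
                LinearMap.ker (counit (R := k) (A := K)))).mkQ ∘ₗ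
            ((LinearMap.id - (Algebra.linearMap k K) ∘ₗ
              (counit (R := k) (A := K))).codRestrict _ hproj))
          (LinearMap.id : M →ₗ[k] M)) := by
    apply TensorProduct.ext'
    intro x n
    simp only [LinearMap.comp_apply, TensorProduct.map_tmul, LinearMap.id_apply,
      LinearEquiv.coe_coe, TensorProduct.lid_tmul, hev]
    congr 1
    show (D p.1) x = (D p.1) (x - algebraMap k K (counit (R := k) x))
    simp only [LinearMap.codRestrict_apply, LinearMap.sub_apply, LinearMap.id_apply,
      LinearMap.comp_apply, Algebra.linearMap_apply, map_sub, Algebra.algebraMap_eq_smul_one,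
      map_smul, h1, hεp, smul_zero, sub_zero]
  exact congrArg (fun f : K ⊗[k] M →ₗ[k] M => f (ρ m)) hmaps
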